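/- Fix ε > 0, β = (β₀, β_N, β_C) ∈ ℝ^{n+k+1}, and data points ξⁱ = (xⁱ, zⁱ, yⁱ) ∈ Ξ for i ∈ [N]. Suppose λ ∈ ℝ and s ∈ ℝᴺ satisfy ‖β_N‖_* ≤ λ and, for every i ∈ [N] and every z ∈ C, both l_β(xⁱ, z, yⁱ) − λ·d_C(z, zⁱ) ≤ s_i and l_β(xⁱ, z, −yⁱ) − λκ − λ·d_C(z, zⁱ) ≤ s_i. Then for every probability measure Q on Ξ with W(Q, P̂_N) ≤ ε, one has E_Q[l_β] ≤ λε + (1/N)∑_{i=1}^N s_i. -/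

import Mathlib

open scoped BigOperators ENNReal NNReal
open MeasureTheory

noncomputable section

namespace DRLR

/-- `catCube s` is the one-hot encoding set `C(s) = {z ∈ {0,1}^{s-1} : ∑ z_j ≤ 1}`
of a categorical feature with `s` possible values. -/
def catCube (s : ℕ) : Set (Fin (s - 1) → ℝ) :=
  {z | (∀ i, z i = 0 ∨ z i = 1) ∧ ∑ i, z i ≤ 1}

variable (n m : ℕ) (k : Fin m → ℕ)

/-- Ambient space containing the categorical block `C = C(k₁) × ⋯ × C(k_m)`. -/
abbrev CatSpace := (j : Fin m) → Fin (k j - 1) → ℝ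

/-- The predicate `z ∈ C`. -/
def memCat (z : CatSpace m k) : Prop := ∀ j, z j ∈ catCube (k j)

/-- Ambient feature-label space `ℝⁿ × (ambient categorical space) × ℝ`. -/
abbrev Amb := (Fin n → ℝ) × CatSpace m k × ℝ

/-- The feature-label support `Ξ = ℝⁿ × C × {-1, +1}` as a subset of the ambient space. -/
def XiSet : Set (Amb n m k) :=
  {ξ | memCat m k ξ.2.1 ∧ (ξ.2.2 = -1 ∨ ξ.2.2 = 1)}

/-- `Ξ` as a (measurable) type. -/
abbrev Xi := {ξ : Amb n m k // ξ ∈ XiSet n m k}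

/-- The categorical metric `d_C(z, z') = (∑_j 1[z_j ≠ z'_j])^{1/p}`. -/
def dCat (p : ℝ) (z z' : CatSpace m k) : ℝ :=
  (({j | z j ≠ z' j}.ncard : ℝ)) ^ (1 / p)

/-- The ground metric
`d(ξ, ξ') = ‖x - x'‖ + d_C(z, z') + κ·1[y ≠ y']` on the ambient space. -/
def gdist (nrm : (Fin n → ℝ) → ℝ) (κ p : ℝ) (ξ ξ' : Amb n m k) : ℝ :=
  nrm (ξ.1 - ξ'.1) + dCat m k p ξ.2.1 ξ'.2.1 + κ * (if ξ.2.2 ≠ ξ'.2.2 then 1 else 0)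

/-- The log-loss `l_β(x, z, y) = log (1 + exp (-y·(β₀ + β_Nᵀx + β_Cᵀz)))`. -/
def logloss (β₀ : ℝ) (βN : Fin n → ℝ) (βC : CatSpace m k) (ξ : Amb n m k) : ℝ :=
  Real.log (1 + Real.exp
    (-(ξ.2.2 * (β₀ + ∑ i, βN i * ξ.1 i + ∑ j, ∑ i, βC j i * ξ.2.1 j i))))

/-- The empirical distribution `P̂_N = (1/N) ∑ᵢ δ_{ξⁱ}`. -/
def empMeasure (N : ℕ) (ξdata : Fin N → Xi n m k) : Measure (Xi n m k) :=
  (N : ℝ≥0∞)⁻¹ • ∑ i, Measure.dirac (ξdata i)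

/-- Couplings of two probability measures on `Ξ`. -/
def couplings (Q P : Measure (Xi n m k)) : Set (Measure (Xi n m k × Xi n m k)) :=
  {π | IsProbabilityMeasure π ∧ π.fst = Q ∧ π.snd = P}

/-- The type-1 Wasserstein distance on probability measures over `Ξ`. -/
def wass (nrm : (Fin n → ℝ) → ℝ) (κ p : ℝ) (Q P : Measure (Xi n m k)) : ℝ≥0∞ :=
  ⨅ π ∈ couplings n m k Q P,
    ∫⁻ q, ENNReal.ofReal (gdist n m k nrm κ p q.1.1 q.2.1) ∂π

/-- Expected log-loss (as an extended nonnegative real). -/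
def expLoss (β₀ : ℝ) (βN : Fin n → ℝ) (βC : CatSpace m k) (Q : Measure (Xi n m k)) : ℝ≥0∞ :=
  ∫⁻ ξ, ENNReal.ofReal (logloss n m k β₀ βN βC ξ.1) ∂Q

/-- Worst-case expected log-loss over the Wasserstein ball `B_ε(P̂_N)`. -/
def worstCase (nrm : (Fin n → ℝ) → ℝ) (κ p ε : ℝ) (β₀ : ℝ) (βN : Fin n → ℝ)
    (βC : CatSpace m k) (N : ℕ) (ξdata : Fin N → Xi n m k) : ℝ≥0∞ :=
  sSup {t : ℝ≥0∞ | ∃ Q : Measure (Xi n m k), IsProbabilityMeasure Q ∧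
    wass n m k nrm κ p Q (empMeasure n m k N ξdata) ≤ ENNReal.ofReal ε ∧
    t = expLoss n m k β₀ βN βC Q}

/-- The dual norm `‖γ‖_* = sup {γᵀw : nrm w ≤ 1}`. -/
def dualNorm (nrm : (Fin n → ℝ) → ℝ) (γ : Fin n → ℝ) : ℝ :=
  sSup {t : ℝ | ∃ w : Fin n → ℝ, nrm w ≤ 1 ∧ t = ∑ i, γ i * w i}

/-- Feasibility of `(λ, s)` in the dual reformulation for fixed `β`. -/
def feasibleDual (nrm : (Fin n → ℝ) → ℝ) (κ p : ℝ) (β₀ : ℝ) (βN : Fin n → ℝ)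
    (βC : CatSpace m k) (N : ℕ) (ξdata : Fin N → Xi n m k)
    (lam : ℝ) (s : Fin N → ℝ) : Prop :=
  dualNorm n nrm βN ≤ lam ∧
  ∀ i : Fin N, ∀ z : CatSpace m k, memCat m k z →
    (logloss n m k β₀ βN βC ((ξdata i).1.1, z, (ξdata i).1.2.2)
        - lam * dCat m k p z (ξdata i).1.2.1 ≤ s i) ∧
    (logloss n m k β₀ βN βC ((ξdata i).1.1, z, -(ξdata i).1.2.2)
        - lam * κ - lam * dCat m k p z (ξdata i).1.2.1 ≤ s i)

end DRLR

open scoped BigOperators ENNReal NNReal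
open MeasureTheory

noncomputable section

namespace DRLRAux

section Norm
variable {n : ℕ} {nrm : (Fin n → ℝ) → ℝ}

lemma nrm_zero (hnrm_def : ∀ w, nrm w = 0 ↔ w = 0) : nrm 0 = 0 := (hnrm_def 0).mpr rfl

lemma nrm_neg (hnrm_smul : ∀ (c : ℝ) (w : Fin n → ℝ), nrm (c • w) = |c| * nrm w)
    (w : Fin n → ℝ) : nrm (-w) = nrm w := by
  have := hnrm_smul (-1) w
  simpa using this

lemma nrm_nonneg (hnrm_def : ∀ w, nrm w = 0 ↔ w = 0)
    (hnrm_smul : ∀ (c : ℝ) (w : Fin n → ℝ), nrm (c • w) = |c| * nrm w)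
    (hnrm_add : ∀ w w', nrm (w + w') ≤ nrm w + nrm w')
    (w : Fin n → ℝ) : 0 ≤ nrm w := by
  have h := hnrm_add w (-w)
  rw [add_neg_cancel, nrm_zero hnrm_def, nrm_neg hnrm_smul] at h
  linarith

lemma nrm_sum_le (hnrm_def : ∀ w, nrm w = 0 ↔ w = 0)
    (hnrm_add : ∀ w w', nrm (w + w') ≤ nrm w + nrm w')
    {ι : Type*} (t : Finset ι) (g : ι → (Fin n → ℝ)) :
    nrm (∑ i ∈ t, g i) ≤ ∑ i ∈ t, nrm (g i) := by
  classical
  induction t using Finset.cons_induction with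
  | empty => simp [nrm_zero hnrm_def]
  | cons a t ha ih =>
    rw [Finset.sum_cons, Finset.sum_cons]
    exact le_trans (hnrm_add _ _) (by linarith)

lemma nrm_le_norm (hnrm_def : ∀ w, nrm w = 0 ↔ w = 0)
    (hnrm_smul : ∀ (c : ℝ) (w : Fin n → ℝ), nrm (c • w) = |c| * nrm w)
    (hnrm_add : ∀ w w', nrm (w + w') ≤ nrm w + nrm w')
    (w : Fin n → ℝ) : nrm w ≤ (∑ i, nrm (Pi.single i 1)) * ‖w‖ := by
  classical
  have hdec : w = ∑ i, (w i) • (Pi.single i (1:ℝ) : Fin n → ℝ) := by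
    have h1 : ∀ i : Fin n, (w i) • (Pi.single i (1:ℝ) : Fin n → ℝ) = Pi.single i (w i) := by
      intro i; ext j; by_cases h : j = i <;> simp [Pi.single_apply, h]
    simp_rw [h1]
    exact (Finset.univ_sum_single w).symm
  calc nrm w = nrm (∑ i, (w i) • (Pi.single i (1:ℝ) : Fin n → ℝ)) := by rw [← hdec]
    _ ≤ ∑ i, nrm ((w i) • (Pi.single i (1:ℝ) : Fin n → ℝ)) := nrm_sum_le hnrm_def hnrm_add _ _
    _ = ∑ i, |w i| * nrm (Pi.single i (1:ℝ)) := by simp_rw [hnrm_smul]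
    _ ≤ ∑ i, ‖w‖ * nrm (Pi.single i (1:ℝ)) := by
        apply Finset.sum_le_sum
        intro i _
        have h1 : |w i| ≤ ‖w‖ := by
          have := norm_le_pi_norm w i
          simpa [Real.norm_eq_abs] using this
        exact mul_le_mul_of_nonneg_right h1 (nrm_nonneg hnrm_def hnrm_smul hnrm_add _)
    _ = (∑ i, nrm (Pi.single i 1)) * ‖w‖ := by rw [← Finset.mul_sum, mul_comm]

lemma nrm_continuous (hnrm_def : ∀ w, nrm w = 0 ↔ w = 0)
    (hnrm_smul : ∀ (c : ℝ) (w : Fin n → ℝ), nrm (c • w) = |c| * nrm w)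
    (hnrm_add : ∀ w w', nrm (w + w') ≤ nrm w + nrm w') :
    Continuous nrm := by
  set C : ℝ := ∑ i, nrm (Pi.single i 1) with hC
  have hlip : ∀ u v : Fin n → ℝ, |nrm u - nrm v| ≤ C * ‖u - v‖ := by
    intro u v
    have h1 : nrm u - nrm v ≤ nrm (u - v) := by
      have := hnrm_add (u - v) v
      rw [sub_add_cancel] at this
      linarith
    have h2 : nrm v - nrm u ≤ nrm (u - v) := by
      have := hnrm_add (v - u) u
      rw [sub_add_cancel] at this
      have hneg : nrm (v - u) = nrm (u - v) := by
        rw [← nrm_neg hnrm_smul (u - v)]; congr 1; abel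
      linarith
    have h3 : nrm (u - v) ≤ C * ‖u - v‖ := nrm_le_norm hnrm_def hnrm_smul hnrm_add _
    rw [abs_sub_le_iff]
    constructor <;> linarith
  have : LipschitzWith (Real.toNNReal C) nrm := by
    apply LipschitzWith.of_dist_le_mul
    intro u v
    rw [Real.dist_eq, dist_eq_norm]
    calc |nrm u - nrm v| ≤ C * ‖u - v‖ := hlip u v
      _ ≤ (Real.toNNReal C : ℝ) * ‖u - v‖ := by
          apply mul_le_mul_of_nonneg_right _ (norm_nonneg _)
          simp [Real.coe_toNNReal', le_max_left]
  exact this.continuous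

lemma nrm_lower (hnrm_def : ∀ w, nrm w = 0 ↔ w = 0)
    (hnrm_smul : ∀ (c : ℝ) (w : Fin n → ℝ), nrm (c • w) = |c| * nrm w)
    (hnrm_add : ∀ w w', nrm (w + w') ≤ nrm w + nrm w') :
    ∃ c > 0, ∀ w, c * ‖w‖ ≤ nrm w := by
  rcases Nat.eq_zero_or_pos n with hn | hn
  · refine ⟨1, one_pos, ?_⟩
    intro w
    have hw : w = 0 := by subst hn; ext i; exact absurd i.2 (by omega)
    simp [hw, nrm_zero hnrm_def]
  · -- a point on the unit sphere
    set e : Fin n → ℝ := Pi.single (⟨0, hn⟩ : Fin n) (1:ℝ) with he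
    have hene : ‖e‖ = 1 := by
      apply le_antisymm
      · apply pi_norm_le_iff_of_nonneg (by norm_num) |>.mpr
        intro i
        by_cases h : i = (⟨0, hn⟩ : Fin n) <;> simp [he, Pi.single_apply, h]
      · calc (1:ℝ) = ‖e ⟨0, hn⟩‖ := by simp [he]
          _ ≤ ‖e‖ := norm_le_pi_norm e _
    have hsphne : (Metric.sphere (0 : Fin n → ℝ) 1).Nonempty :=
      ⟨e, by simpa [mem_sphere_zero_iff_norm] using hene⟩
    obtain ⟨w₀, hw₀S, hmin⟩ := (isCompact_sphere (0 : Fin n → ℝ) 1).exists_isMinOn hsphne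
      (nrm_continuous hnrm_def hnrm_smul hnrm_add).continuousOn
    have hw₀n : ‖w₀‖ = 1 := by simpa [mem_sphere_zero_iff_norm] using hw₀S
    have hw₀ne : w₀ ≠ 0 := by
      intro h; rw [h, norm_zero] at hw₀n; norm_num at hw₀n
    have hc : 0 < nrm w₀ := by
      rcases lt_or_eq_of_le (nrm_nonneg hnrm_def hnrm_smul hnrm_add w₀) with h | h
      · exact h
      · exact absurd ((hnrm_def w₀).mp h.symm) hw₀ne
    refine ⟨nrm w₀, hc, ?_⟩
    intro w
    rcases eq_or_ne w 0 with hw | hw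
    · simp [hw, nrm_zero hnrm_def]
    · have hwn : (0:ℝ) < ‖w‖ := norm_pos_iff.mpr hw
      set u : Fin n → ℝ := ‖w‖⁻¹ • w with hu
      have hun : ‖u‖ = 1 := by
        rw [hu, norm_smul, norm_inv, norm_norm, inv_mul_cancel₀ (ne_of_gt hwn)]
      have hmem : u ∈ Metric.sphere (0 : Fin n → ℝ) 1 := by
        simpa [mem_sphere_zero_iff_norm] using hun
      have h1 : nrm w₀ ≤ nrm u := isMinOn_iff.mp hmin u hmem
      have h2 : nrm w = ‖w‖ * nrm u := by
        have : w = ‖w‖ • u := by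
          rw [hu, smul_smul, mul_inv_cancel₀ (ne_of_gt hwn), one_smul]
        conv_lhs => rw [this]
        rw [hnrm_smul, abs_of_pos hwn]
      rw [h2]
      calc nrm w₀ * ‖w‖ = ‖w‖ * nrm w₀ := by ring
        _ ≤ ‖w‖ * nrm u := by
            exact mul_le_mul_of_nonneg_left h1 (le_of_lt hwn)

end Norm
end DRLRAux

namespace DRLRAux
open DRLR

section Dual
variable {n : ℕ} {nrm : (Fin n → ℝ) → ℝ}

lemma dual_set_bddAbove (hnrm_def : ∀ w, nrm w = 0 ↔ w = 0)
    (hnrm_smul : ∀ (c : ℝ) (w : Fin n → ℝ), nrm (c • w) = |c| * nrm w)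
    (hnrm_add : ∀ w w', nrm (w + w') ≤ nrm w + nrm w') (γ : Fin n → ℝ) :
    BddAbove {t : ℝ | ∃ w : Fin n → ℝ, nrm w ≤ 1 ∧ t = ∑ i, γ i * w i} := by
  obtain ⟨c, hc, hlow⟩ := nrm_lower hnrm_def hnrm_smul hnrm_add
  refine ⟨(∑ i, |γ i|) * c⁻¹, ?_⟩
  rintro t ⟨w, hw, rfl⟩
  have hwle : ‖w‖ ≤ c⁻¹ := by
    have h1 := hlow w
    have h2 : c * ‖w‖ ≤ c * c⁻¹ := by
      rw [mul_inv_cancel₀ (ne_of_gt hc)]; exact le_trans h1 hw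
    exact le_of_mul_le_mul_left h2 hc
  calc ∑ i, γ i * w i ≤ ∑ i, |γ i| * ‖w‖ := by
        apply Finset.sum_le_sum
        intro i _
        calc γ i * w i ≤ |γ i * w i| := le_abs_self _
          _ = |γ i| * |w i| := abs_mul _ _
          _ ≤ |γ i| * ‖w‖ := by
              have := norm_le_pi_norm w i
              exact mul_le_mul_of_nonneg_left (by simpa [Real.norm_eq_abs] using this) (abs_nonneg _)
    _ = (∑ i, |γ i|) * ‖w‖ := by rw [← Finset.sum_mul]
    _ ≤ (∑ i, |γ i|) * c⁻¹ := by
        apply mul_le_mul_of_nonneg_left hwle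
        positivity

lemma dualNorm_nonneg (hnrm_def : ∀ w, nrm w = 0 ↔ w = 0)
    (hnrm_smul : ∀ (c : ℝ) (w : Fin n → ℝ), nrm (c • w) = |c| * nrm w)
    (hnrm_add : ∀ w w', nrm (w + w') ≤ nrm w + nrm w') (γ : Fin n → ℝ) :
    0 ≤ dualNorm n nrm γ := by
  apply le_csSup (dual_set_bddAbove hnrm_def hnrm_smul hnrm_add γ)
  exact ⟨0, by simp [nrm_zero hnrm_def]⟩

lemma sum_le_dualNorm (hnrm_def : ∀ w, nrm w = 0 ↔ w = 0)
    (hnrm_smul : ∀ (c : ℝ) (w : Fin n → ℝ), nrm (c • w) = |c| * nrm w)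
    (hnrm_add : ∀ w w', nrm (w + w') ≤ nrm w + nrm w') (γ w : Fin n → ℝ) :
    ∑ i, γ i * w i ≤ dualNorm n nrm γ * nrm w := by
  rcases eq_or_ne (nrm w) 0 with h0 | h0
  · have hw : w = 0 := (hnrm_def w).mp h0
    subst hw
    simp [nrm_zero hnrm_def]
  · have hpos : 0 < nrm w :=
      lt_of_le_of_ne (nrm_nonneg hnrm_def hnrm_smul hnrm_add w) (Ne.symm h0)
    set u : Fin n → ℝ := (nrm w)⁻¹ • w with hu
    have hun : nrm u = 1 := by
      rw [hu, hnrm_smul, abs_of_pos (by positivity), inv_mul_cancel₀ h0]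
    have hmem : (∑ i, γ i * u i) ∈ {t : ℝ | ∃ w : Fin n → ℝ, nrm w ≤ 1 ∧ t = ∑ i, γ i * w i} :=
      ⟨u, le_of_eq hun, rfl⟩
    have h1 : ∑ i, γ i * u i ≤ dualNorm n nrm γ :=
      le_csSup (dual_set_bddAbove hnrm_def hnrm_smul hnrm_add γ) hmem
    have h2 : ∑ i, γ i * w i = nrm w * ∑ i, γ i * u i := by
      rw [Finset.mul_sum]
      apply Finset.sum_congr rfl
      intro i _
      rw [hu]
      simp only [Pi.smul_apply, smul_eq_mul]
      field_simp
    rw [h2, mul_comm (dualNorm n nrm γ) (nrm w)]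
    exact mul_le_mul_of_nonneg_left h1 (le_of_lt hpos)

lemma abs_sum_le_dualNorm (hnrm_def : ∀ w, nrm w = 0 ↔ w = 0)
    (hnrm_smul : ∀ (c : ℝ) (w : Fin n → ℝ), nrm (c • w) = |c| * nrm w)
    (hnrm_add : ∀ w w', nrm (w + w') ≤ nrm w + nrm w') (γ w : Fin n → ℝ) :
    |∑ i, γ i * w i| ≤ dualNorm n nrm γ * nrm w := by
  rw [abs_le]
  constructor
  · have h := sum_le_dualNorm hnrm_def hnrm_smul hnrm_add γ (-w)
    have h1 : ∑ i, γ i * (-w) i = -∑ i, γ i * w i := by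
      rw [← Finset.sum_neg_distrib]; apply Finset.sum_congr rfl; intros; simp [mul_neg]
    have h2 : nrm (-w) = nrm w := nrm_neg hnrm_smul w
    rw [h1, h2] at h
    linarith
  · exact sum_le_dualNorm hnrm_def hnrm_smul hnrm_add γ w

end Dual
end DRLRAux

namespace DRLRAux
open DRLR

lemma softplus_lip (a b : ℝ) :
    Real.log (1 + Real.exp a) ≤ Real.log (1 + Real.exp b) + |a - b| := by
  rcases le_total a b with h | h
  · have h1 : Real.log (1 + Real.exp a) ≤ Real.log (1 + Real.exp b) :=
      Real.log_le_log (by positivity) (by have := Real.exp_le_exp.mpr h; linarith)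
    have h2 : (0:ℝ) ≤ |a - b| := abs_nonneg _
    linarith
  · have h2 : (1 + Real.exp a) ≤ Real.exp (a - b) * (1 + Real.exp b) := by
      have h1 : 1 ≤ Real.exp (a - b) := Real.one_le_exp (by linarith)
      have h3 : Real.exp (a - b) * Real.exp b = Real.exp a := by
        rw [← Real.exp_add]; ring_nf
      nlinarith [Real.exp_pos b]
    calc Real.log (1 + Real.exp a) ≤ Real.log (Real.exp (a - b) * (1 + Real.exp b)) :=
          Real.log_le_log (by positivity) h2
      _ = (a - b) + Real.log (1 + Real.exp b) := by
          rw [Real.log_mul (by positivity) (by positivity), Real.log_exp]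
      _ ≤ Real.log (1 + Real.exp b) + |a - b| := by
          have := le_abs_self (a - b); linarith

lemma measurable_of_zero_off_finite {α : Type*} [MeasurableSpace α] [MeasurableSingletonClass α]
    (f : α → ℝ) (F : Set α) (hF : F.Finite) (h : ∀ x ∉ F, f x = 0) : Measurable f := by
  intro B _
  by_cases h0 : (0:ℝ) ∈ B
  · have hEq : f ⁻¹' B = (f ⁻¹' B ∩ F) ∪ Fᶜ := by
      ext x
      constructor
      · intro hx
        by_cases hxF : x ∈ F
        · exact Or.inl ⟨hx, hxF⟩
        · exact Or.inr hxF
      · rintro (⟨hx, _⟩ | hx)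
        · exact hx
        · show f x ∈ B
          rw [h x hx]; exact h0
    rw [hEq]
    exact ((hF.subset Set.inter_subset_right).measurableSet).union hF.measurableSet.compl
  · have hEq : f ⁻¹' B = f ⁻¹' B ∩ F := by
      ext x
      constructor
      · intro hx
        refine ⟨hx, ?_⟩
        by_contra hxF
        have h1 : f x ∈ B := hx
        rw [h x hxF] at h1
        exact h0 h1
      · exact fun hx => hx.1
    rw [hEq]
    exact (hF.subset Set.inter_subset_right).measurableSet

lemma dCat_nonneg (m : ℕ) (k : Fin m → ℕ) (p : ℝ) (z z' : CatSpace m k) :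
    0 ≤ dCat m k p z z' := Real.rpow_nonneg (Nat.cast_nonneg _) _

lemma dCat_self (m : ℕ) (k : Fin m → ℕ) {p : ℝ} (hp : 0 < p) (z : CatSpace m k) :
    dCat m k p z z = 0 := by
  unfold dCat
  have h1 : {j | z j ≠ z j} = ∅ := by ext j; simp
  rw [h1]
  simp only [Set.ncard_empty, Nat.cast_zero]
  exact Real.zero_rpow (by positivity)

lemma logloss_nonneg (n m : ℕ) (k : Fin m → ℕ) (β₀ : ℝ) (βN : Fin n → ℝ) (βC : CatSpace m k)
    (ξ : Amb n m k) : 0 ≤ logloss n m k β₀ βN βC ξ := by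
  unfold logloss
  have := Real.exp_pos (-(ξ.2.2 * (β₀ + ∑ i, βN i * ξ.1 i + ∑ j, ∑ i, βC j i * ξ.2.1 j i)))
  exact Real.log_nonneg (by linarith)

lemma gdist_nonneg {n m : ℕ} {k : Fin m → ℕ} {nrm : (Fin n → ℝ) → ℝ}
    (hnrm_def : ∀ w, nrm w = 0 ↔ w = 0)
    (hnrm_smul : ∀ (c : ℝ) (w : Fin n → ℝ), nrm (c • w) = |c| * nrm w)
    (hnrm_add : ∀ w w', nrm (w + w') ≤ nrm w + nrm w')
    {κ : ℝ} (hκ : 0 < κ) (p : ℝ) (ξ ξ' : Amb n m k) :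
    0 ≤ gdist n m k nrm κ p ξ ξ' := by
  unfold gdist
  have h1 := nrm_nonneg hnrm_def hnrm_smul hnrm_add (ξ.1 - ξ'.1)
  have h2 := dCat_nonneg m k p ξ.2.1 ξ'.2.1
  have h3 : (0:ℝ) ≤ κ * (if ξ.2.2 ≠ ξ'.2.2 then 1 else 0) := by positivity
  linarith

end DRLRAux

namespace DRLRAux
open DRLR

lemma logloss_continuous (n m : ℕ) (k : Fin m → ℕ) (β₀ : ℝ) (βN : Fin n → ℝ)
    (βC : CatSpace m k) : Continuous (logloss n m k β₀ βN βC) := by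
  unfold logloss
  have hin : Continuous (fun ξ : Amb n m k =>
      β₀ + ∑ i, βN i * ξ.1 i + ∑ j, ∑ i, βC j i * ξ.2.1 j i) := by
    apply Continuous.add
    · apply Continuous.add continuous_const
      exact continuous_finset_sum _ fun i _ =>
        continuous_const.mul ((continuous_apply i).comp continuous_fst)
    · exact continuous_finset_sum _ fun j _ => continuous_finset_sum _ fun i _ =>
        continuous_const.mul ((continuous_apply i).comp
          ((continuous_apply j).comp (continuous_fst.comp continuous_snd)))
  have hy : Continuous (fun ξ : Amb n m k => ξ.2.2) := continuous_snd.comp continuous_snd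
  have harg : Continuous (fun ξ : Amb n m k =>
      (1 + Real.exp (-(ξ.2.2 * (β₀ + ∑ i, βN i * ξ.1 i + ∑ j, ∑ i, βC j i * ξ.2.1 j i))))) :=
    continuous_const.add (Real.continuous_exp.comp (hy.mul hin).neg)
  exact harg.log fun ξ => by positivity

lemma key_pointwise {n m : ℕ} {k : Fin m → ℕ} {nrm : (Fin n → ℝ) → ℝ}
    (hnrm_def : ∀ w, nrm w = 0 ↔ w = 0)
    (hnrm_smul : ∀ (c : ℝ) (w : Fin n → ℝ), nrm (c • w) = |c| * nrm w)
    (hnrm_add : ∀ w w', nrm (w + w') ≤ nrm w + nrm w')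
    {κ p : ℝ} (hκ : 0 < κ) (hp : 0 < p)
    {β₀ : ℝ} {βN : Fin n → ℝ} {βC : CatSpace m k}
    {N : ℕ} {ξdata : Fin N → Xi n m k} {lam : ℝ} {s : Fin N → ℝ}
    (hfeas : feasibleDual n m k nrm κ p β₀ βN βC N ξdata lam s)
    (i : Fin N) (ξ : Xi n m k) :
    logloss n m k β₀ βN βC ξ.1 ≤ s i + lam * gdist n m k nrm κ p ξ.1 (ξdata i).1 := by
  obtain ⟨hdual, hpt⟩ := hfeas
  have hlam0 : 0 ≤ lam := le_trans (dualNorm_nonneg hnrm_def hnrm_smul hnrm_add βN) hdual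
  obtain ⟨⟨x, z, y⟩, hmem⟩ := ξ
  have hzC : memCat m k z := hmem.1
  have hy : y = -1 ∨ y = 1 := hmem.2
  have hyi : (ξdata i).1.2.2 = -1 ∨ (ξdata i).1.2.2 = 1 := (ξdata i).2.2
  set xi : Fin n → ℝ := (ξdata i).1.1 with hxi
  set zi : CatSpace m k := (ξdata i).1.2.1 with hzi
  set yi : ℝ := (ξdata i).1.2.2 with hyidef
  -- Step 1: Lipschitz in x
  set A : ℝ := β₀ + ∑ i', βN i' * x i' + ∑ j, ∑ i', βC j i' * z j i' with hA
  set B : ℝ := β₀ + ∑ i', βN i' * xi i' + ∑ j, ∑ i', βC j i' * z j i' with hB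
  have hyabs : |y| = 1 := by rcases hy with h | h <;> rw [h] <;> norm_num
  have hAB : A - B = ∑ i', βN i' * (x - xi) i' := by
    rw [hA, hB]
    have : β₀ + ∑ i', βN i' * x i' + ∑ j, ∑ i', βC j i' * z j i'
        - (β₀ + ∑ i', βN i' * xi i' + ∑ j, ∑ i', βC j i' * z j i')
        = ∑ i', βN i' * x i' - ∑ i', βN i' * xi i' := by ring
    rw [this, ← Finset.sum_sub_distrib]
    apply Finset.sum_congr rfl
    intro i' _
    simp [Pi.sub_apply]
    ring
  have habs : |(-(y * A)) - (-(y * B))| ≤ lam * nrm (x - xi) := by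
    have h1 : (-(y * A)) - (-(y * B)) = -y * (A - B) := by ring
    rw [h1, abs_mul, abs_neg, hyabs, one_mul, hAB]
    calc |∑ i', βN i' * (x - xi) i'| ≤ dualNorm n nrm βN * nrm (x - xi) :=
          abs_sum_le_dualNorm hnrm_def hnrm_smul hnrm_add βN (x - xi)
      _ ≤ lam * nrm (x - xi) :=
          mul_le_mul_of_nonneg_right hdual (nrm_nonneg hnrm_def hnrm_smul hnrm_add _)
  have hstep1 : logloss n m k β₀ βN βC (x, z, y)
      ≤ logloss n m k β₀ βN βC (xi, z, y) + lam * nrm (x - xi) := by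
    have e1 : logloss n m k β₀ βN βC (x, z, y) = Real.log (1 + Real.exp (-(y * A))) := rfl
    have e2 : logloss n m k β₀ βN βC (xi, z, y) = Real.log (1 + Real.exp (-(y * B))) := rfl
    rw [e1, e2]
    calc Real.log (1 + Real.exp (-(y * A)))
        ≤ Real.log (1 + Real.exp (-(y * B))) + |(-(y * A)) - (-(y * B))| :=
          softplus_lip _ _
      _ ≤ Real.log (1 + Real.exp (-(y * B))) + lam * nrm (x - xi) := by linarith
  -- Step 2: case analysis on the label
  have hnn := nrm_nonneg hnrm_def hnrm_smul hnrm_add (x - xi)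
  have hdnn := dCat_nonneg m k p z zi
  by_cases hyy : y = yi
  · have hfe := (hpt i z hzC).1
    have hgd : gdist n m k nrm κ p ((x, z, y) : Amb n m k) (ξdata i).1
        = nrm (x - xi) + dCat m k p z zi + κ * 0 := by
      unfold gdist
      rw [if_neg (by simp [hyy, hyidef])]
    have hll : logloss n m k β₀ βN βC (xi, z, y) = logloss n m k β₀ βN βC (xi, z, yi) := by
      rw [hyy]
    have hring : lam * (nrm (x - xi) + dCat m k p z zi + κ * 0)
        = lam * nrm (x - xi) + lam * dCat m k p z zi := by ring
    rw [hgd, hring]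
    -- hfe : logloss (xi, z, yi) - lam * dCat z zi ≤ s i
    have hfe' : logloss n m k β₀ βN βC (xi, z, yi) - lam * dCat m k p z zi ≤ s i := hfe
    linarith [hstep1, hll ▸ hstep1]
  · have hfe := (hpt i z hzC).2
    have hneg : y = -yi := by
      rcases hy with h | h <;> rcases hyi with h' | h'
      · exact absurd (h.trans h'.symm) hyy
      · rw [h, h']; try norm_num
      · rw [h, h']; try norm_num
      · exact absurd (h.trans h'.symm) hyy
    have hgd : gdist n m k nrm κ p ((x, z, y) : Amb n m k) (ξdata i).1
        = nrm (x - xi) + dCat m k p z zi + κ * 1 := by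
      unfold gdist
      rw [if_pos (by exact hyy)]
    have hll : logloss n m k β₀ βN βC (xi, z, y) = logloss n m k β₀ βN βC (xi, z, -yi) := by
      rw [hneg]
    have hfe' : logloss n m k β₀ βN βC (xi, z, -yi) - lam * κ - lam * dCat m k p z zi ≤ s i :=
      hfe
    have hring : lam * (nrm (x - xi) + dCat m k p z zi + κ * 1)
        = lam * nrm (x - xi) + lam * dCat m k p z zi + lam * κ := by ring
    rw [hgd, hring]
    linarith [hstep1, hll ▸ hstep1]

end DRLRAux

open DRLR in
/-- weak duality: if `(λ, s)` is feasible for the dual reformulation, i.e.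
`‖β_N‖_* ≤ λ` and for every data point `i` and every `z ∈ C` both
`l_β(xⁱ, z, yⁱ) - λ d_C(z, zⁱ) ≤ sᵢ` and `l_β(xⁱ, z, -yⁱ) - λκ - λ d_C(z, zⁱ) ≤ sᵢ`,
then for every probability measure `Q` with `W(Q, P̂_N) ≤ ε` one has
`E_Q[l_β] ≤ λ ε + (1/N) ∑ᵢ sᵢ`. -/
theorem dual_feasible_upper_bound
    (n m : ℕ) (k : Fin m → ℕ) (hk : ∀ j, 2 ≤ k j)
    (nrm : (Fin n → ℝ) → ℝ)
    (hnrm_def : ∀ w, nrm w = 0 ↔ w = 0)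
    (hnrm_smul : ∀ (c : ℝ) (w : Fin n → ℝ), nrm (c • w) = |c| * nrm w)
    (hnrm_add : ∀ w w', nrm (w + w') ≤ nrm w + nrm w')
    (κ p : ℝ) (hκ : 0 < κ) (hp : 0 < p)
    (ε : ℝ) (hε : 0 < ε)
    (β₀ : ℝ) (βN : Fin n → ℝ) (βC : CatSpace m k)
    (N : ℕ) (hN : 0 < N) (ξdata : Fin N → Xi n m k)
    (lam : ℝ) (s : Fin N → ℝ)
    (hfeas : feasibleDual n m k nrm κ p β₀ βN βC N ξdata lam s) :
    ∀ Q : MeasureTheory.Measure (Xi n m k), MeasureTheory.IsProbabilityMeasure Q →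
      wass n m k nrm κ p Q (empMeasure n m k N ξdata) ≤ ENNReal.ofReal ε →
      expLoss n m k β₀ βN βC Q ≤ ENNReal.ofReal (lam * ε + (1 / N) * ∑ i, s i) := by
  classical
  intro Q hQ hW
  obtain ⟨hdual, hpt⟩ := hfeas
  have hfeas' : feasibleDual n m k nrm κ p β₀ βN βC N ξdata lam s := ⟨hdual, hpt⟩
  have hlam0 : 0 ≤ lam :=
    le_trans (DRLRAux.dualNorm_nonneg hnrm_def hnrm_smul hnrm_add βN) hdual
  -- s i is nonnegative
  have hs0 : ∀ i, 0 ≤ s i := by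
    intro i
    have h := (hpt i (ξdata i).1.2.1 ((ξdata i).2.1)).1
    have hd : dCat m k p (ξdata i).1.2.1 (ξdata i).1.2.1 = 0 := DRLRAux.dCat_self m k hp _
    have hll := DRLRAux.logloss_nonneg n m k β₀ βN βC
      ((ξdata i).1.1, (ξdata i).1.2.1, (ξdata i).1.2.2)
    rw [hd] at h
    linarith
  have hsum0 : (0:ℝ) ≤ (1 / N) * ∑ i, s i := by
    have : (0:ℝ) ≤ ∑ i, s i := Finset.sum_nonneg fun i _ => hs0 i
    positivity
  have hlε0 : (0:ℝ) ≤ lam * ε := mul_nonneg hlam0 (le_of_lt hε)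
  -- measurability of the loss
  have hlmeas : Measurable fun ξ : Xi n m k => ENNReal.ofReal (logloss n m k β₀ βN βC ξ.1) :=
    (((DRLRAux.logloss_continuous n m k β₀ βN βC).comp
      continuous_subtype_val).measurable).ennreal_ofReal
  -- the function f on data points
  set R : Set (Xi n m k) := Set.range ξdata with hR
  have hRfin : R.Finite := Set.finite_range _
  set f : Xi n m k → ℝ := fun ξ' => sInf {t | ∃ i, ξdata i = ξ' ∧ t = s i} with hf
  have hfmeas : Measurable f := by
    apply DRLRAux.measurable_of_zero_off_finite f R hRfin
    intro ξ' hξ'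
    have hempty : {t | ∃ i, ξdata i = ξ' ∧ t = s i} = ∅ := by
      ext t
      simp only [Set.mem_setOf_eq, Set.mem_empty_iff_false, iff_false, not_exists]
      rintro i ⟨hi, -⟩
      exact hξ' ⟨i, hi⟩
    rw [hf]
    simp only [hempty]
    exact Real.sInf_empty
  have hfle : ∀ i, f (ξdata i) ≤ s i := by
    intro i
    apply csInf_le
    · refine BddBelow.mono ?_ (Set.finite_range s).bddBelow
      rintro t ⟨i', -, rfl⟩
      exact ⟨i', rfl⟩
    · exact ⟨i, rfl, rfl⟩
  -- main estimate via ε-optimal couplings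
  apply ENNReal.le_of_forall_pos_le_add
  intro η hη _
  set δ : ℝ := (η : ℝ) / (lam + 1) with hδ
  have hδpos : 0 < δ := by
    apply div_pos _ (by linarith)
    exact_mod_cast hη
  have hlt : wass n m k nrm κ p Q (empMeasure n m k N ξdata) < ENNReal.ofReal (ε + δ) :=
    lt_of_le_of_lt hW (by
      rw [ENNReal.ofReal_lt_ofReal_iff (by linarith)]
      linarith)
  rw [wass] at hlt
  obtain ⟨π, hπmem, hπcost⟩ : ∃ π ∈ couplings n m k Q (empMeasure n m k N ξdata),
      ∫⁻ q, ENNReal.ofReal (gdist n m k nrm κ p q.1.1 q.2.1) ∂π < ENNReal.ofReal (ε + δ) := by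
    simpa [iInf_lt_iff] using hlt
  obtain ⟨hπprob, hfst, hsnd⟩ := hπmem
  -- a.e. the second coordinate is a data point
  have hRm : MeasurableSet R := hRfin.measurableSet
  have hae : ∀ᵐ q ∂π, q.2 ∈ R := by
    rw [ae_iff]
    have hset : {q : Xi n m k × Xi n m k | ¬ q.2 ∈ R} = Prod.snd ⁻¹' Rᶜ := rfl
    rw [hset, ← Measure.snd_apply hRm.compl, hsnd]
    have hz : ∀ i : Fin N, Measure.dirac (ξdata i) Rᶜ = 0 := by
      intro i
      rw [Measure.dirac_apply' _ hRm.compl]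
      apply Set.indicator_of_notMem
      simp only [Set.mem_compl_iff, not_not]
      exact ⟨i, rfl⟩
    rw [empMeasure]
    simp [Measure.finset_sum_apply, hz]
  -- pointwise bound
  have hkey : ∀ q : Xi n m k × Xi n m k, q.2 ∈ R →
      ENNReal.ofReal (logloss n m k β₀ βN βC q.1.1)
        ≤ ENNReal.ofReal (f q.2) + ENNReal.ofReal (lam * gdist n m k nrm κ p q.1.1 q.2.1) := by
    rintro q ⟨i₀, hi₀⟩
    have hreal : logloss n m k β₀ βN βC q.1.1 - lam * gdist n m k nrm κ p q.1.1 q.2.1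
        ≤ f q.2 := by
      refine le_csInf ⟨s i₀, ⟨i₀, hi₀, rfl⟩⟩ ?_
      rintro t ⟨i, hi, rfl⟩
      have h := DRLRAux.key_pointwise hnrm_def hnrm_smul hnrm_add hκ hp hfeas' i q.1
      rw [hi] at h
      linarith
    calc ENNReal.ofReal (logloss n m k β₀ βN βC q.1.1)
        ≤ ENNReal.ofReal (f q.2 + lam * gdist n m k nrm κ p q.1.1 q.2.1) :=
          ENNReal.ofReal_le_ofReal (by linarith)
      _ ≤ ENNReal.ofReal (f q.2) + ENNReal.ofReal (lam * gdist n m k nrm κ p q.1.1 q.2.1) :=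
          ENNReal.ofReal_add_le
  -- term 1 bound
  have hterm1 : ∫⁻ q, ENNReal.ofReal (f q.2) ∂π ≤ ENNReal.ofReal ((1 / N) * ∑ i, s i) := by
    have h1 : ∫⁻ q, ENNReal.ofReal (f q.2) ∂π = ∫⁻ ξ', ENNReal.ofReal (f ξ') ∂(π.snd) := by
      rw [Measure.snd, lintegral_map hfmeas.ennreal_ofReal measurable_snd]
    rw [h1, hsnd, empMeasure, lintegral_smul_measure, lintegral_finset_sum_measure]
    simp_rw [lintegral_dirac' _ hfmeas.ennreal_ofReal]
    have hNinv : ((N : ℝ≥0∞))⁻¹ = ENNReal.ofReal (1 / N) := by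
      rw [one_div, ENNReal.ofReal_inv_of_pos (by exact_mod_cast hN), ENNReal.ofReal_natCast]
    calc (N : ℝ≥0∞)⁻¹ * ∑ i, ENNReal.ofReal (f (ξdata i))
        ≤ (N : ℝ≥0∞)⁻¹ * ∑ i, ENNReal.ofReal (s i) := by
          apply mul_le_mul_right
          exact Finset.sum_le_sum fun i _ => ENNReal.ofReal_le_ofReal (hfle i)
      _ = ENNReal.ofReal (1 / N) * ENNReal.ofReal (∑ i, s i) := by
          rw [hNinv, ← ENNReal.ofReal_sum_of_nonneg fun i _ => hs0 i]
      _ = ENNReal.ofReal ((1 / N) * ∑ i, s i) := by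
          rw [← ENNReal.ofReal_mul (by positivity)]
  -- term 2 bound
  have hterm2 : ∫⁻ q, ENNReal.ofReal (lam * gdist n m k nrm κ p q.1.1 q.2.1) ∂π
      ≤ ENNReal.ofReal (lam * ε) + (η : ℝ≥0∞) := by
    have h1 : ∫⁻ q, ENNReal.ofReal (lam * gdist n m k nrm κ p q.1.1 q.2.1) ∂π
        = ENNReal.ofReal lam * ∫⁻ q, ENNReal.ofReal (gdist n m k nrm κ p q.1.1 q.2.1) ∂π := by
      simp_rw [ENNReal.ofReal_mul hlam0]
      exact lintegral_const_mul' _ _ ENNReal.ofReal_ne_top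
    have hld : lam * δ ≤ (η : ℝ) := by
      have h2 : (0:ℝ) ≤ (η : ℝ) := η.coe_nonneg
      rw [hδ, mul_comm, div_mul_eq_mul_div, div_le_iff₀ (by linarith : (0:ℝ) < lam + 1)]
      nlinarith
    calc ∫⁻ q, ENNReal.ofReal (lam * gdist n m k nrm κ p q.1.1 q.2.1) ∂π
        = ENNReal.ofReal lam * ∫⁻ q, ENNReal.ofReal (gdist n m k nrm κ p q.1.1 q.2.1) ∂π := h1
      _ ≤ ENNReal.ofReal lam * ENNReal.ofReal (ε + δ) := mul_le_mul_right hπcost.le _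
      _ = ENNReal.ofReal (lam * (ε + δ)) := (ENNReal.ofReal_mul hlam0).symm
      _ = ENNReal.ofReal (lam * ε + lam * δ) := by ring_nf
      _ ≤ ENNReal.ofReal (lam * ε) + ENNReal.ofReal (lam * δ) := ENNReal.ofReal_add_le
      _ ≤ ENNReal.ofReal (lam * ε) + (η : ℝ≥0∞) := by
          apply add_le_add_right
          calc ENNReal.ofReal (lam * δ) ≤ ENNReal.ofReal (η : ℝ) := ENNReal.ofReal_le_ofReal hld
            _ = (η : ℝ≥0∞) := ENNReal.ofReal_coe_nnreal
  -- put everything together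
  calc expLoss n m k β₀ βN βC Q
      = ∫⁻ q, ENNReal.ofReal (logloss n m k β₀ βN βC q.1.1) ∂π := by
        rw [expLoss, ← hfst, Measure.fst, lintegral_map hlmeas measurable_fst]
    _ ≤ ∫⁻ q, (ENNReal.ofReal (f q.2)
          + ENNReal.ofReal (lam * gdist n m k nrm κ p q.1.1 q.2.1)) ∂π :=
        lintegral_mono_ae (hae.mono fun q hq => hkey q hq)
    _ = ∫⁻ q, ENNReal.ofReal (f q.2) ∂π
          + ∫⁻ q, ENNReal.ofReal (lam * gdist n m k nrm κ p q.1.1 q.2.1) ∂π :=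
        lintegral_add_left (hfmeas.comp measurable_snd).ennreal_ofReal _
    _ ≤ ENNReal.ofReal ((1 / N) * ∑ i, s i) + (ENNReal.ofReal (lam * ε) + (η : ℝ≥0∞)) :=
        add_le_add hterm1 hterm2
    _ = ENNReal.ofReal (lam * ε + (1 / N) * ∑ i, s i) + (η : ℝ≥0∞) := by
        rw [← add_assoc, ← ENNReal.ofReal_add hsum0 hlε0,
          add_comm ((1:ℝ) / N * ∑ i, s i) (lam * ε)]
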